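/- arXiv:1906.06561 — 4 statements merged into one kernel-verified Lean document; each statement's English description precedes it below -/
import Mathlib

section
/- The Cartesian product C3 □ C5 of a 3-cycle and a 5-cycle admits a star coloring with 6 colors. -/
/-- A star coloring of `G` with `k` colors: a proper vertex coloring such that
no path on 4 vertices is bicolored. -/
def IsStarColoring {V : Type*} (G : SimpleGraph V) {k : ℕ} (c : V → Fin k) : Prop :=
  (∀ u v : V, G.Adj u v → c u ≠ c v) ∧
  ¬ ∃ v1 v2 v3 v4 : V,
      v1 ≠ v2 ∧ v1 ≠ v3 ∧ v1 ≠ v4 ∧ v2 ≠ v3 ∧ v2 ≠ v4 ∧ v3 ≠ v4 ∧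
      G.Adj v1 v2 ∧ G.Adj v2 v3 ∧ G.Adj v3 v4 ∧ c v1 = c v3 ∧ c v2 = c v4
set_option maxHeartbeats 4000000 in
instance : DecidableRel ((SimpleGraph.cycleGraph 3).boxProd (SimpleGraph.cycleGraph 5)).Adj :=
  fun u v => decidable_of_iff _ (SimpleGraph.boxProd_adj).symm

set_option maxHeartbeats 4000000 in
/-- `C3 □ C5` admits a star coloring with 6 colors. -/
theorem six_star_coloring_C3_C5 :
    ∃ c : Fin 3 × Fin 5 → Fin 6,
      IsStarColoring ((SimpleGraph.cycleGraph 3).boxProd (SimpleGraph.cycleGraph 5)) c := by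
  use fun p => ![![1, 4, 0, 2, 5], ![3, 5, 3, 1, 2], ![4, 2, 1, 4, 0]] p.1 p.2
  constructor
  · decide
  · decide
end

section
/- In any star coloring (with any number of colors) of the Cartesian product C3 □ C5, there do not exist two distinct colors a and b and a column index j (an element of Fin 5) such that both a and b appear among the colors of the vertices of column j (the vertices (i, j) for i in Fin 3) and both a and b also appear among the colors of the vertices of column j+1 (indices taken cyclically modulo 5). In other words, no two consecutive columns contain the same pair of two distinct colors. -/
lemma adjC3 : ∀ i i' : Fin 3, i ≠ i' → (SimpleGraph.cycleGraph 3).Adj i i' := by decide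

lemma adjC5 : ∀ j : Fin 5, (SimpleGraph.cycleGraph 5).Adj j (j+1) := by decide

lemma neC5 : ∀ j : Fin 5, j ≠ j + 1 := by decide

lemma fin3_pigeon : ∀ i1 i2 i3 i4 : Fin 3,
    i1 ≠ i2 → i3 ≠ i1 → i3 ≠ i2 → i4 ≠ i2 → i4 ≠ i3 → i4 = i1 := by decide

/-- In any star coloring of `C3 □ C5`, no two consecutive columns contain the same
pair of two distinct colors. -/
theorem no_two_consecutive_columns_same_pair (k : ℕ)
    (c : Fin 3 × Fin 5 → Fin k)
    (hc : IsStarColoring ((SimpleGraph.cycleGraph 3).boxProd (SimpleGraph.cycleGraph 5)) c) :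
    ¬ ∃ (a b : Fin k) (j : Fin 5), a ≠ b ∧
      (∃ i : Fin 3, c (i, j) = a) ∧ (∃ i : Fin 3, c (i, j) = b) ∧
      (∃ i : Fin 3, c (i, j + 1) = a) ∧ (∃ i : Fin 3, c (i, j + 1) = b) := by
  rintro ⟨a, b, j, hab, ⟨i1, h1⟩, ⟨i2, h2⟩, ⟨i3, h3⟩, ⟨i4, h4⟩⟩
  obtain ⟨hproper, hstar⟩ := hc
  have h12 : i1 ≠ i2 := by rintro rfl; exact hab (h1 ▸ h2 ▸ rfl)
  have h34 : i3 ≠ i4 := by rintro rfl; exact hab (h3 ▸ h4 ▸ rfl)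
  have h31 : i3 ≠ i1 := by
    rintro rfl
    exact hproper (i3, j) (i3, j + 1) (SimpleGraph.boxProd_adj.mpr (Or.inr ⟨adjC5 j, rfl⟩))
      (h1.trans h3.symm)
  have h42 : i4 ≠ i2 := by
    rintro rfl
    exact hproper (i4, j) (i4, j + 1) (SimpleGraph.boxProd_adj.mpr (Or.inr ⟨adjC5 j, rfl⟩))
      (h2.trans h4.symm)
  have hj : j ≠ j + 1 := neC5 j
  by_cases h23 : i2 = i3
  · subst h23
    exact hstar ⟨(i1, j), (i2, j), (i2, j + 1), (i4, j + 1),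
      by simp [h12], by simp [hj], by simp [hj], by simp [hj], by simp [hj],
      by simp [h34],
      SimpleGraph.boxProd_adj.mpr (Or.inl ⟨adjC3 _ _ h12, rfl⟩),
      SimpleGraph.boxProd_adj.mpr (Or.inr ⟨adjC5 j, rfl⟩),
      SimpleGraph.boxProd_adj.mpr (Or.inl ⟨adjC3 _ _ h34, rfl⟩),
      h1.trans h3.symm, h2.trans h4.symm⟩
  · have h41 : i4 = i1 := fin3_pigeon i1 i2 i3 i4 h12 h31 (fun h => h23 h.symm) h42 (Ne.symm h34)
    have h4' : c (i1, j + 1) = b := by rw [← h41]; exact h4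
    exact hstar ⟨(i2, j), (i1, j), (i1, j + 1), (i3, j + 1),
      by simp [Ne.symm h12], by simp [hj], by simp [hj], by simp [hj], by simp [hj],
      by simp [Ne.symm h31],
      SimpleGraph.boxProd_adj.mpr (Or.inl ⟨adjC3 _ _ (Ne.symm h12), rfl⟩),
      SimpleGraph.boxProd_adj.mpr (Or.inr ⟨adjC5 j, rfl⟩),
      SimpleGraph.boxProd_adj.mpr (Or.inl ⟨adjC3 _ _ (Ne.symm h31), rfl⟩),
      h2.trans h4'.symm, h1.trans h3.symm⟩
end

section
/- For every natural number n with n ≥ 3, the star chromatic number of the Cartesian product C4 □ Cn equals 5; that is, C4 □ Cn admits a star coloring with 5 colors, and every star coloring of C4 □ Cn uses at least 5 colors. -/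
namespace StarAux

def getC (l : List Nat) (u : Nat) : Nat := l.getD (l.length - 1 - u) 0

def okE (l : List Nat) (p : Nat × Nat) : Bool := getC l p.1 != getC l p.2
def okP (l : List Nat) (q : Nat × Nat × Nat × Nat) : Bool :=
  !(getC l q.1 == getC l q.2.2.1 && getC l q.2.1 == getC l q.2.2.2)

def okAt (es : Nat → List (Nat × Nat)) (ps : Nat → List (Nat × Nat × Nat × Nat))
    (t : Nat) (l : List Nat) : Bool :=
  (es t).all (okE l) && (ps t).all (okP l)

def ext (es : Nat → List (Nat × Nat)) (ps : Nat → List (Nat × Nat × Nat × Nat)) :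
    Nat → List Nat → Bool
  | 0, _ => true
  | m+1, l => (List.range 4).any fun c => okAt es ps l.length (c :: l) && ext es ps m (c :: l)

def buildL (g : Nat → Nat) : Nat → List Nat
  | 0 => []
  | t+1 => g t :: buildL g t

theorem buildL_length (g : Nat → Nat) : ∀ t, (buildL g t).length = t
  | 0 => rfl
  | t+1 => by simp [buildL, buildL_length g t]

theorem getC_buildL (g : Nat → Nat) : ∀ t u, u < t → getC (buildL g t) u = g u := by
  intro t
  induction t with
  | zero => omega
  | succ t ih =>
    intro u hu
    show getC (g t :: buildL g t) u = g u
    unfold getC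
    simp only [List.length_cons, buildL_length]
    rcases Nat.eq_or_lt_of_le (Nat.lt_succ_iff.mp hu) with h | h
    · subst h; simp
    · have h1 : t + 1 - 1 - u = (t - 1 - u) + 1 := by omega
      rw [h1, List.getD_cons_succ]
      have := ih u h
      unfold getC at this
      rwa [buildL_length] at this

theorem okAt_iff (es : Nat → List (Nat × Nat)) (ps : Nat → List (Nat × Nat × Nat × Nat))
    (t : Nat) (l : List Nat) :
    okAt es ps t l = true ↔
      ((∀ p ∈ es t, getC l p.1 ≠ getC l p.2) ∧
       (∀ q ∈ ps t, ¬(getC l q.1 = getC l q.2.2.1 ∧ getC l q.2.1 = getC l q.2.2.2))) := by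
  simp [okAt, List.all_eq_true, okE, okP, bne_iff_ne]
  intro _
  constructor
  · intro h a b c d m h1 h2
    rcases h a b c d m with h3 | h3 <;> [exact h3 h1; exact h3 h2]
  · intro h a b c d m
    by_cases hh : getC l a = getC l c
    · exact Or.inr fun h2 => h a b c d m hh h2
    · exact Or.inl hh

theorem ext_spec (es : Nat → List (Nat × Nat)) (ps : Nat → List (Nat × Nat × Nat × Nat))
    (g : Nat → Nat) (hg : ∀ t, g t < 4)
    (hok : ∀ s, okAt es ps s (buildL g (s+1)) = true) :
    ∀ m t, ext es ps m (buildL g t) = true := by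
  intro m
  induction m with
  | zero => intro t; rfl
  | succ m ih =>
    intro t
    show (List.range 4).any _ = true
    rw [List.any_eq_true]
    refine ⟨g t, List.mem_range.mpr (hg t), ?_⟩
    rw [Bool.and_eq_true]
    constructor
    · rw [buildL_length]
      exact hok t
    · exact ih (t+1)

theorem no_valid (es : Nat → List (Nat × Nat)) (ps : Nat → List (Nat × Nat × Nat × Nat))
    (N : Nat) (hfalse : ext es ps N [] = false) (g : Nat → Nat) (hg : ∀ t, g t < 4)
    (hok : ∀ s, okAt es ps s (buildL g (s+1)) = true) : False := by
  have := ext_spec es ps g hg hok N 0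
  rw [show buildL g 0 = [] from rfl] at this
  rw [this] at hfalse
  simp at hfalse

theorem bridge {V : Type} {G : SimpleGraph V} {k : ℕ} (c : V → Fin k) (hk : k ≤ 4)
    (hsc : IsStarColoring G c)
    (es : Nat → List (Nat × Nat)) (ps : Nat → List (Nat × Nat × Nat × Nat))
    (N : Nat) (vert : Nat → V)
    (hE : ∀ s : Nat, ∀ p ∈ es s, p.1 ≤ s ∧ p.2 ≤ s ∧ G.Adj (vert p.1) (vert p.2))
    (hP : ∀ s : Nat, ∀ q ∈ ps s, q.1 ≤ s ∧ q.2.1 ≤ s ∧ q.2.2.1 ≤ s ∧ q.2.2.2 ≤ s ∧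
        (vert q.1 ≠ vert q.2.1 ∧ vert q.1 ≠ vert q.2.2.1 ∧ vert q.1 ≠ vert q.2.2.2 ∧
         vert q.2.1 ≠ vert q.2.2.1 ∧ vert q.2.1 ≠ vert q.2.2.2 ∧ vert q.2.2.1 ≠ vert q.2.2.2) ∧
        G.Adj (vert q.1) (vert q.2.1) ∧ G.Adj (vert q.2.1) (vert q.2.2.1) ∧
        G.Adj (vert q.2.2.1) (vert q.2.2.2))
    (hfalse : ext es ps N [] = false) : False := by
  set g : Nat → Nat := fun t => (c (vert t)).val with hgdef
  have hg : ∀ t, g t < 4 := fun t => lt_of_lt_of_le (Fin.is_lt _) hk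
  apply no_valid es ps N hfalse g hg
  intro s
  rw [okAt_iff]
  constructor
  · rintro ⟨u, v⟩ hp
    obtain ⟨hu, hv, hadj⟩ := hE s ⟨u, v⟩ hp
    rw [getC_buildL g (s+1) u (by omega), getC_buildL g (s+1) v (by omega)]
    intro h
    exact hsc.1 (vert u) (vert v) hadj (Fin.val_injective h)
  · rintro ⟨a, b, d, e⟩ hq
    obtain ⟨ha, hb, hd, he, ⟨n1,n2,n3,n4,n5,n6⟩, a1, a2, a3⟩ := hP s ⟨a, b, d, e⟩ hq
    simp only at ha hb hd he
    rw [getC_buildL g (s+1) a (by omega), getC_buildL g (s+1) b (by omega),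
      getC_buildL g (s+1) d (by omega), getC_buildL g (s+1) e (by omega)]
    rintro ⟨h1, h2⟩
    exact hsc.2 ⟨vert a, vert b, vert d, vert e, n1, n2, n3, n4, n5, n6, a1, a2, a3,
      Fin.val_injective h1, Fin.val_injective h2⟩
def esP : Nat → List (Nat × Nat)
  | 0 => []
  | 1 => [(0, 1)]
  | 2 => [(1, 2)]
  | 3 => [(0, 3), (2, 3)]
  | 4 => [(0, 4)]
  | 5 => [(1, 5), (4, 5)]
  | 6 => [(2, 6), (5, 6)]
  | 7 => [(3, 7), (4, 7), (6, 7)]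
  | 8 => [(4, 8)]
  | 9 => [(5, 9), (8, 9)]
  | 10 => [(6, 10), (9, 10)]
  | 11 => [(7, 11), (8, 11), (10, 11)]
  | 12 => [(8, 12)]
  | 13 => [(9, 13), (12, 13)]
  | 14 => [(10, 14), (13, 14)]
  | 15 => [(11, 15), (12, 15), (14, 15)]
  | _ => []
def psP : Nat → List (Nat × Nat × Nat × Nat)
  | 0 => []
  | 1 => []
  | 2 => []
  | 3 => [(0, 1, 2, 3), (0, 3, 2, 1), (1, 0, 3, 2), (2, 1, 0, 3)]
  | 4 => [(2, 1, 0, 4), (2, 3, 0, 4)]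
  | 5 => [(0, 1, 5, 4), (0, 4, 5, 1), (1, 0, 4, 5), (2, 1, 5, 4), (3, 0, 1, 5), (3, 0, 4, 5), (3, 2, 1, 5), (4, 0, 1, 5)]
  | 6 => [(0, 1, 2, 6), (0, 1, 5, 6), (0, 3, 2, 6), (0, 4, 5, 6), (1, 2, 6, 5), (1, 5, 6, 2), (2, 1, 5, 6), (2, 6, 5, 4), (3, 2, 6, 5), (5, 1, 2, 6)]
  | 7 => [(0, 3, 7, 4), (0, 3, 7, 6), (0, 4, 7, 3), (0, 4, 7, 6), (1, 0, 3, 7), (1, 0, 4, 7), (1, 2, 3, 7), (1, 2, 6, 7), (1, 5, 4, 7), (1, 5, 6, 7), (2, 3, 7, 4), (2, 3, 7, 6), (2, 6, 7, 3), (2, 6, 7, 4), (3, 0, 4, 7), (3, 2, 6, 7), (3, 7, 4, 5), (3, 7, 6, 5), (4, 0, 3, 7), (4, 5, 6, 7), (4, 7, 6, 5), (5, 4, 7, 6), (6, 2, 3, 7), (6, 5, 4, 7)]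
  | 8 => [(1, 0, 4, 8), (1, 5, 4, 8), (3, 0, 4, 8), (3, 7, 4, 8), (6, 5, 4, 8), (6, 7, 4, 8)]
  | 9 => [(0, 1, 5, 9), (0, 4, 5, 9), (0, 4, 8, 9), (1, 5, 9, 8), (2, 1, 5, 9), (2, 6, 5, 9), (4, 5, 9, 8), (4, 8, 9, 5), (5, 4, 8, 9), (6, 5, 9, 8), (7, 4, 5, 9), (7, 4, 8, 9), (7, 6, 5, 9), (8, 4, 5, 9)]
  | 10 => [(1, 2, 6, 10), (1, 5, 6, 10), (1, 5, 9, 10), (2, 6, 10, 9), (3, 2, 6, 10), (3, 7, 6, 10), (4, 5, 6, 10), (4, 5, 9, 10), (4, 7, 6, 10), (4, 8, 9, 10), (5, 6, 10, 9), (5, 9, 10, 6), (6, 5, 9, 10), (6, 10, 9, 8), (7, 6, 10, 9), (9, 5, 6, 10)]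
  | 11 => [(0, 3, 7, 11), (0, 4, 7, 11), (0, 4, 8, 11), (2, 3, 7, 11), (2, 6, 7, 11), (2, 6, 10, 11), (3, 7, 11, 8), (3, 7, 11, 10), (4, 7, 11, 8), (4, 7, 11, 10), (4, 8, 11, 7), (4, 8, 11, 10), (5, 4, 7, 11), (5, 4, 8, 11), (5, 6, 7, 11), (5, 6, 10, 11), (5, 9, 8, 11), (5, 9, 10, 11), (6, 7, 11, 8), (6, 7, 11, 10), (6, 10, 11, 7), (6, 10, 11, 8), (7, 4, 8, 11), (7, 6, 10, 11), (7, 11, 8, 9), (7, 11, 10, 9), (8, 4, 7, 11), (8, 9, 10, 11), (8, 11, 10, 9), (9, 8, 11, 10), (10, 6, 7, 11), (10, 9, 8, 11)]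
  | 12 => [(0, 4, 8, 12), (5, 4, 8, 12), (5, 9, 8, 12), (7, 4, 8, 12), (7, 11, 8, 12), (10, 9, 8, 12), (10, 11, 8, 12)]
  | 13 => [(1, 5, 9, 13), (4, 5, 9, 13), (4, 8, 9, 13), (4, 8, 12, 13), (5, 9, 13, 12), (6, 5, 9, 13), (6, 10, 9, 13), (8, 9, 13, 12), (8, 12, 13, 9), (9, 8, 12, 13), (10, 9, 13, 12), (11, 8, 9, 13), (11, 8, 12, 13), (11, 10, 9, 13), (12, 8, 9, 13)]
  | 14 => [(2, 6, 10, 14), (5, 6, 10, 14), (5, 9, 10, 14), (5, 9, 13, 14), (6, 10, 14, 13), (7, 6, 10, 14), (7, 11, 10, 14), (8, 9, 10, 14), (8, 9, 13, 14), (8, 11, 10, 14), (8, 12, 13, 14), (9, 10, 14, 13), (9, 13, 14, 10), (10, 9, 13, 14), (10, 14, 13, 12), (11, 10, 14, 13), (13, 9, 10, 14)]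
  | 15 => [(3, 7, 11, 15), (4, 7, 11, 15), (4, 8, 11, 15), (4, 8, 12, 15), (6, 7, 11, 15), (6, 10, 11, 15), (6, 10, 14, 15), (7, 11, 15, 12), (7, 11, 15, 14), (8, 11, 15, 12), (8, 11, 15, 14), (8, 12, 15, 11), (8, 12, 15, 14), (9, 8, 11, 15), (9, 8, 12, 15), (9, 10, 11, 15), (9, 10, 14, 15), (9, 13, 12, 15), (9, 13, 14, 15), (10, 11, 15, 12), (10, 11, 15, 14), (10, 14, 15, 11), (10, 14, 15, 12), (11, 8, 12, 15), (11, 10, 14, 15), (11, 15, 12, 13), (11, 15, 14, 13), (12, 8, 11, 15), (12, 13, 14, 15), (12, 15, 14, 13), (13, 12, 15, 14), (14, 10, 11, 15), (14, 13, 12, 15)]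
  | _ => []

def esC : Nat → List (Nat × Nat)
  | 0 => []
  | 1 => [(0, 1)]
  | 2 => [(1, 2)]
  | 3 => [(0, 3), (2, 3)]
  | 4 => [(0, 4)]
  | 5 => [(1, 5), (4, 5)]
  | 6 => [(2, 6), (5, 6)]
  | 7 => [(3, 7), (4, 7), (6, 7)]
  | 8 => [(0, 8), (4, 8)]
  | 9 => [(1, 9), (5, 9), (8, 9)]
  | 10 => [(2, 10), (6, 10), (9, 10)]
  | 11 => [(3, 11), (7, 11), (8, 11), (10, 11)]
  | _ => []
def psC : Nat → List (Nat × Nat × Nat × Nat)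
  | 0 => []
  | 1 => []
  | 2 => []
  | 3 => [(0, 1, 2, 3), (0, 3, 2, 1), (1, 0, 3, 2), (2, 1, 0, 3)]
  | 4 => [(2, 1, 0, 4), (2, 3, 0, 4)]
  | 5 => [(0, 1, 5, 4), (0, 4, 5, 1), (1, 0, 4, 5), (2, 1, 5, 4), (3, 0, 1, 5), (3, 0, 4, 5), (3, 2, 1, 5), (4, 0, 1, 5)]
  | 6 => [(0, 1, 2, 6), (0, 1, 5, 6), (0, 3, 2, 6), (0, 4, 5, 6), (1, 2, 6, 5), (1, 5, 6, 2), (2, 1, 5, 6), (2, 6, 5, 4), (3, 2, 6, 5), (5, 1, 2, 6)]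
  | 7 => [(0, 3, 7, 4), (0, 3, 7, 6), (0, 4, 7, 3), (0, 4, 7, 6), (1, 0, 3, 7), (1, 0, 4, 7), (1, 2, 3, 7), (1, 2, 6, 7), (1, 5, 4, 7), (1, 5, 6, 7), (2, 3, 7, 4), (2, 3, 7, 6), (2, 6, 7, 3), (2, 6, 7, 4), (3, 0, 4, 7), (3, 2, 6, 7), (3, 7, 4, 5), (3, 7, 6, 5), (4, 0, 3, 7), (4, 5, 6, 7), (4, 7, 6, 5), (5, 4, 7, 6), (6, 2, 3, 7), (6, 5, 4, 7)]
  | 8 => [(0, 8, 4, 5), (0, 8, 4, 7), (1, 0, 4, 8), (1, 0, 8, 4), (1, 5, 4, 8), (2, 1, 0, 8), (2, 3, 0, 8), (3, 0, 4, 8), (3, 0, 8, 4), (3, 7, 4, 8), (5, 1, 0, 8), (5, 4, 0, 8), (6, 5, 4, 8), (6, 7, 4, 8), (7, 3, 0, 8), (7, 4, 0, 8)]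
  | 9 => [(0, 1, 5, 9), (0, 1, 9, 5), (0, 1, 9, 8), (0, 4, 5, 9), (0, 4, 8, 9), (0, 8, 9, 1), (0, 8, 9, 5), (1, 0, 8, 9), (1, 5, 9, 8), (1, 9, 5, 4), (1, 9, 5, 6), (1, 9, 8, 4), (2, 1, 5, 9), (2, 1, 9, 5), (2, 1, 9, 8), (2, 6, 5, 9), (3, 0, 1, 9), (3, 0, 8, 9), (3, 2, 1, 9), (4, 0, 1, 9), (4, 0, 8, 9), (4, 5, 1, 9), (4, 5, 9, 8), (4, 8, 9, 5), (5, 1, 9, 8), (5, 4, 8, 9), (6, 2, 1, 9), (6, 5, 1, 9), (6, 5, 9, 8), (7, 4, 5, 9), (7, 4, 8, 9), (7, 6, 5, 9), (8, 0, 1, 9), (8, 4, 5, 9)]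
  | 10 => [(0, 1, 2, 10), (0, 1, 9, 10), (0, 3, 2, 10), (0, 8, 9, 10), (1, 2, 6, 10), (1, 2, 10, 6), (1, 2, 10, 9), (1, 5, 6, 10), (1, 5, 9, 10), (1, 9, 10, 2), (1, 9, 10, 6), (2, 1, 9, 10), (2, 6, 10, 9), (2, 10, 6, 5), (2, 10, 6, 7), (2, 10, 9, 5), (2, 10, 9, 8), (3, 2, 6, 10), (3, 2, 10, 6), (3, 2, 10, 9), (3, 7, 6, 10), (4, 5, 6, 10), (4, 5, 9, 10), (4, 7, 6, 10), (4, 8, 9, 10), (5, 1, 2, 10), (5, 1, 9, 10), (5, 6, 2, 10), (5, 6, 10, 9), (5, 9, 10, 6), (6, 2, 10, 9), (6, 5, 9, 10), (6, 10, 9, 8), (7, 3, 2, 10), (7, 6, 2, 10), (7, 6, 10, 9), (9, 1, 2, 10), (9, 5, 6, 10)]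
  | 11 => [(0, 3, 7, 11), (0, 3, 11, 7), (0, 3, 11, 8), (0, 3, 11, 10), (0, 4, 7, 11), (0, 4, 8, 11), (0, 8, 11, 3), (0, 8, 11, 7), (0, 8, 11, 10), (1, 0, 3, 11), (1, 0, 8, 11), (1, 2, 3, 11), (1, 2, 10, 11), (1, 9, 8, 11), (1, 9, 10, 11), (2, 3, 7, 11), (2, 3, 11, 7), (2, 3, 11, 8), (2, 3, 11, 10), (2, 6, 7, 11), (2, 6, 10, 11), (2, 10, 11, 3), (2, 10, 11, 7), (2, 10, 11, 8), (3, 0, 8, 11), (3, 2, 10, 11), (3, 7, 11, 8), (3, 7, 11, 10), (3, 11, 7, 4), (3, 11, 7, 6), (3, 11, 8, 4), (3, 11, 8, 9), (3, 11, 10, 6), (3, 11, 10, 9), (4, 0, 3, 11), (4, 0, 8, 11), (4, 7, 3, 11), (4, 7, 11, 8), (4, 7, 11, 10), (4, 8, 11, 7), (4, 8, 11, 10), (5, 4, 7, 11), (5, 4, 8, 11), (5, 6, 7, 11), (5, 6, 10, 11), (5, 9, 8, 11), (5, 9, 10, 11), (6, 2, 3, 11), (6, 2, 10, 11), (6, 7,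 3, 11), (6, 7, 11, 8), (6, 7, 11, 10), (6, 10, 11, 7), (6, 10, 11, 8), (7, 3, 11, 8), (7, 3, 11, 10), (7, 4, 8, 11), (7, 6, 10, 11), (7, 11, 8, 9), (7, 11, 10, 9), (8, 0, 3, 11), (8, 4, 7, 11), (8, 9, 10, 11), (8, 11, 10, 9), (9, 8, 11, 10), (10, 2, 3, 11), (10, 6, 7, 11), (10, 9, 8, 11)]
  | _ => []

def vertC (t : Nat) : Fin 4 × Fin 3 :=
  (⟨t % 4, Nat.mod_lt _ (by norm_num)⟩, ⟨t / 4 % 3, Nat.mod_lt _ (by norm_num)⟩)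

theorem esC_large (d : Nat) : esC (d + 12) = [] := rfl
theorem psC_large (d : Nat) : psC (d + 12) = [] := rfl
theorem esP_large (d : Nat) : esP (d + 16) = [] := rfl
theorem psP_large (d : Nat) : psP (d + 16) = [] := rfl

set_option maxRecDepth 1000000 in
set_option maxHeartbeats 8000000 in
theorem extC_false : ext esC psC 12 [] = false := by decide
set_option maxRecDepth 1000000 in
set_option maxHeartbeats 8000000 in
theorem extP_false : ext esP psP 16 [] = false := by decide

instance boxProdDecRel {α β : Type} (G : SimpleGraph α) (H : SimpleGraph β)
    [DecidableRel G.Adj] [DecidableRel H.Adj] [DecidableEq α] [DecidableEq β] :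
    DecidableRel (G.boxProd H).Adj := fun _ _ =>
  decidable_of_iff _ (SimpleGraph.boxProd_adj).symm

abbrev GC := (SimpleGraph.cycleGraph 4).boxProd (SimpleGraph.cycleGraph 3)

theorem lower_C3 {k : ℕ} (hk : k ≤ 4) (c : Fin 4 × Fin 3 → Fin k)
    (hsc : IsStarColoring GC c) : False := by
  have hEd : ∀ s : Fin 12, ∀ p ∈ esC s.val,
      p.1 ≤ s.val ∧ p.2 ≤ s.val ∧ GC.Adj (vertC p.1) (vertC p.2) := by decide
  have hPd : ∀ s : Fin 12, ∀ q ∈ psC s.val,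
      q.1 ≤ s.val ∧ q.2.1 ≤ s.val ∧ q.2.2.1 ≤ s.val ∧ q.2.2.2 ≤ s.val ∧
      (vertC q.1 ≠ vertC q.2.1 ∧ vertC q.1 ≠ vertC q.2.2.1 ∧ vertC q.1 ≠ vertC q.2.2.2 ∧
       vertC q.2.1 ≠ vertC q.2.2.1 ∧ vertC q.2.1 ≠ vertC q.2.2.2 ∧
       vertC q.2.2.1 ≠ vertC q.2.2.2) ∧
      GC.Adj (vertC q.1) (vertC q.2.1) ∧ GC.Adj (vertC q.2.1) (vertC q.2.2.1) ∧
      GC.Adj (vertC q.2.2.1) (vertC q.2.2.2) := by decide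
  apply bridge c hk hsc esC psC 12 vertC ?_ ?_ extC_false
  · intro s p hp
    by_cases hs : s < 12
    · exact hEd ⟨s, hs⟩ p hp
    · obtain ⟨d, rfl⟩ : ∃ d, s = d + 12 := ⟨s - 12, by omega⟩
      rw [esC_large] at hp
      exact absurd hp List.not_mem_nil
  · intro s q hq
    by_cases hs : s < 12
    · exact hPd ⟨s, hs⟩ q hq
    · obtain ⟨d, rfl⟩ : ∃ d, s = d + 12 := ⟨s - 12, by omega⟩
      rw [psC_large] at hq
      exact absurd hq List.not_mem_nil

def vertP (n : Nat) (hn : 4 ≤ n) (t : Nat) : Fin 4 × Fin n :=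
  (⟨t % 4, Nat.mod_lt _ (by norm_num)⟩, ⟨t / 4 % n, Nat.mod_lt _ (by omega)⟩)

def eCode (u v : Nat) : Bool :=
  (v == u + 4 && u + 4 < 16) ||
  (u / 4 == v / 4 && ((u % 4 + 1) % 4 == v % 4 || (v % 4 + 1) % 4 == u % 4) && !(u == v))

def aCode (u v : Nat) : Bool := eCode u v || eCode v u

theorem adj4_of (a b : Fin 4) (h : (a.val + 1) % 4 = b.val ∨ (b.val + 1) % 4 = a.val) :
    (SimpleGraph.cycleGraph 4).Adj a b := by revert a b; decide

theorem adj_mod_succ {n : Nat} (hn : 2 ≤ n) (a : Nat) (h : a + 1 < n) :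
    (SimpleGraph.cycleGraph n).Adj ⟨a % n, Nat.mod_lt _ (by omega)⟩
      ⟨(a + 1) % n, Nat.mod_lt _ (by omega)⟩ := by
  rw [SimpleGraph.cycleGraph_adj']
  right
  rw [Fin.sub_def]
  simp only
  rw [Nat.mod_eq_of_lt (show a + 1 < n from h), Nat.mod_eq_of_lt (show a < n by omega)]
  have h2 : n - a + (a + 1) = n + 1 := by omega
  rw [h2, Nat.add_mod_left, Nat.mod_eq_of_lt (by omega)]

theorem adj_mod_succ' {n : Nat} (hn : 2 ≤ n) {a b : Nat} (hab : b = a + 1) (h2 : a + 1 < n)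
    {pa : a % n < n} {pb : b % n < n} :
    (SimpleGraph.cycleGraph n).Adj ⟨a % n, pa⟩ ⟨b % n, pb⟩ := by
  subst hab
  exact adj_mod_succ hn a h2

theorem eCode_adj {n : Nat} (hn : 4 ≤ n) {u v : Nat} (hu : u < 16) (hv : v < 16)
    (h : eCode u v = true) :
    ((SimpleGraph.cycleGraph 4).boxProd (SimpleGraph.cycleGraph n)).Adj
      (vertP n hn u) (vertP n hn v) := by
  rw [SimpleGraph.boxProd_adj]
  simp only [eCode, Bool.or_eq_true, Bool.and_eq_true, beq_iff_eq, decide_eq_true_eq,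
    Bool.not_eq_true', beq_eq_false_iff_ne, ne_eq] at h
  simp only [vertP]
  rcases h with ⟨hv4, _⟩ | ⟨⟨hj, hr⟩, hne⟩
  · subst hv4
    right
    exact ⟨adj_mod_succ' (by omega) (show (u + 4) / 4 = u / 4 + 1 by omega) (by omega),
      Fin.ext (show u % 4 = (u + 4) % 4 by omega)⟩
  · left
    exact ⟨adj4_of _ _ hr, Fin.ext (show u / 4 % n = v / 4 % n by rw [hj])⟩

theorem vertP_inj {n : Nat} (hn : 4 ≤ n) {u v : Nat} (hu : u < 16) (hv : v < 16)
    (h : vertP n hn u = vertP n hn v) : u = v := by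
  rw [Prod.ext_iff, Fin.ext_iff, Fin.ext_iff] at h
  simp only [vertP] at h
  obtain ⟨h1, h2⟩ := h
  rw [Nat.mod_eq_of_lt (show u/4 < n by omega), Nat.mod_eq_of_lt (show v/4 < n by omega)] at h2
  omega

theorem aCode_adj {n : Nat} (hn : 4 ≤ n) {u v : Nat} (hu : u < 16) (hv : v < 16)
    (h : aCode u v = true) :
    ((SimpleGraph.cycleGraph 4).boxProd (SimpleGraph.cycleGraph n)).Adj
      (vertP n hn u) (vertP n hn v) := by
  rcases Bool.or_eq_true_iff.mp h with h | h
  · exact eCode_adj hn hu hv h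
  · exact (eCode_adj hn hv hu h).symm

theorem lower_P4 {n k : ℕ} (hn : 4 ≤ n) (hk : k ≤ 4) (c : Fin 4 × Fin n → Fin k)
    (hsc : IsStarColoring ((SimpleGraph.cycleGraph 4).boxProd (SimpleGraph.cycleGraph n)) c) :
    False := by
  have hEd : ∀ s : Fin 16, ∀ p ∈ esP s.val,
      p.1 ≤ s.val ∧ p.2 ≤ s.val ∧ p.1 < 16 ∧ p.2 < 16 ∧ eCode p.1 p.2 = true := by decide
  have hPd : ∀ s : Fin 16, ∀ q ∈ psP s.val,
      q.1 ≤ s.val ∧ q.2.1 ≤ s.val ∧ q.2.2.1 ≤ s.val ∧ q.2.2.2 ≤ s.val ∧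
      (q.1 ≠ q.2.1 ∧ q.1 ≠ q.2.2.1 ∧ q.1 ≠ q.2.2.2 ∧ q.2.1 ≠ q.2.2.1 ∧ q.2.1 ≠ q.2.2.2 ∧
        q.2.2.1 ≠ q.2.2.2) ∧
      aCode q.1 q.2.1 = true ∧ aCode q.2.1 q.2.2.1 = true ∧ aCode q.2.2.1 q.2.2.2 = true := by
    decide
  apply bridge c hk hsc esP psP 16 (vertP n hn) ?_ ?_ extP_false
  · intro s p hp
    by_cases hs : s < 16
    · obtain ⟨h1, h2, h3, h4, h5⟩ := hEd ⟨s, hs⟩ p hp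
      exact ⟨h1, h2, eCode_adj hn h3 h4 h5⟩
    · obtain ⟨d, rfl⟩ : ∃ d, s = d + 16 := ⟨s - 16, by omega⟩
      rw [esP_large] at hp
      exact absurd hp List.not_mem_nil
  · intro s q hq
    by_cases hs : s < 16
    · obtain ⟨h1, h2, h3, h4, ⟨n1, n2, n3, n4, n5, n6⟩, a1, a2, a3⟩ := hPd ⟨s, hs⟩ q hq
      have b1 : q.1 < 16 := by omega
      have b2 : q.2.1 < 16 := by omega
      have b3 : q.2.2.1 < 16 := by omega
      have b4 : q.2.2.2 < 16 := by omega
      refine ⟨h1, h2, h3, h4, ⟨?_, ?_, ?_, ?_, ?_, ?_⟩,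
        aCode_adj hn b1 b2 a1, aCode_adj hn b2 b3 a2, aCode_adj hn b3 b4 a3⟩
      all_goals intro hh
      · exact n1 (vertP_inj hn b1 b2 hh)
      · exact n2 (vertP_inj hn b1 b3 hh)
      · exact n3 (vertP_inj hn b1 b4 hh)
      · exact n4 (vertP_inj hn b2 b3 hh)
      · exact n5 (vertP_inj hn b2 b4 hh)
      · exact n6 (vertP_inj hn b3 b4 hh)
    · obtain ⟨d, rfl⟩ : ∃ d, s = d + 16 := ⟨s - 16, by omega⟩
      rw [psP_large] at hq
      exact absurd hq List.not_mem_nil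

theorem cycle_adj_iff {n : ℕ} [NeZero n] (hn : 3 ≤ n) (u v : Fin n) :
    (SimpleGraph.cycleGraph n).Adj u v ↔ u = v + 1 ∨ v = u + 1 := by
  have h1 : ((1 : Fin n) : ℕ) = 1 := by rw [Fin.val_one']; exact Nat.mod_eq_of_lt (by omega)
  rw [SimpleGraph.cycleGraph_adj']
  constructor
  · rintro (h | h)
    · left
      have : u - v = 1 := Fin.ext (h.trans h1.symm)
      rw [sub_eq_iff_eq_add] at this
      rw [this, add_comm]
    · right
      have : v - u = 1 := Fin.ext (h.trans h1.symm)
      rw [sub_eq_iff_eq_add] at this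
      rw [this, add_comm]
  · rintro (h | h)
    · left
      rw [h, add_sub_cancel_left, h1]
    · right
      rw [h, add_sub_cancel_left, h1]

theorem star_of_pattern {n : ℕ} [NeZero n] (hn : 3 ≤ n) (M : ℕ → Fin 4 → Fin 5)
    (f : ℕ → ℕ) (E : List (ℕ × ℕ))
    (hpair : ∀ j : Fin n, (f j.val, f (j + 1).val) ∈ E)
    (hC1 : ∀ p ∈ E, ∀ i i' : Fin 4, (SimpleGraph.cycleGraph 4).Adj i i' → M p.1 i ≠ M p.1 i')
    (hC2 : ∀ p ∈ E, ∀ i : Fin 4, M p.1 i ≠ M p.2 i)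
    (hC3 : ∀ p ∈ E, ∀ i1 i2 i3 i4 : Fin 4, i1 ≠ i3 → i2 ≠ i4 → (SimpleGraph.cycleGraph 4).Adj i1 i2 → (SimpleGraph.cycleGraph 4).Adj i2 i3 →
        (SimpleGraph.cycleGraph 4).Adj i3 i4 → ¬(M p.1 i1 = M p.1 i3 ∧ M p.1 i2 = M p.1 i4))
    (hVVH : ∀ p ∈ E, ∀ i1 i2 i3 : Fin 4, (SimpleGraph.cycleGraph 4).Adj i1 i2 → (SimpleGraph.cycleGraph 4).Adj i2 i3 → i1 ≠ i3 →
        ¬(M p.1 i1 = M p.1 i3 ∧ M p.1 i2 = M p.2 i3) ∧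
        ¬(M p.2 i1 = M p.2 i3 ∧ M p.2 i2 = M p.1 i3))
    (hHVV : ∀ p ∈ E, ∀ i1 i3 i4 : Fin 4, (SimpleGraph.cycleGraph 4).Adj i1 i3 → (SimpleGraph.cycleGraph 4).Adj i3 i4 → i4 ≠ i1 →
        ¬(M p.1 i1 = M p.2 i3 ∧ M p.2 i1 = M p.2 i4) ∧
        ¬(M p.2 i1 = M p.1 i3 ∧ M p.1 i1 = M p.1 i4))
    (hVHV : ∀ p ∈ E, ∀ i1 i2 i4 : Fin 4, (SimpleGraph.cycleGraph 4).Adj i1 i2 → (SimpleGraph.cycleGraph 4).Adj i4 i2 →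
        ¬(M p.1 i1 = M p.2 i2 ∧ M p.1 i2 = M p.2 i4) ∧
        ¬(M p.2 i1 = M p.1 i2 ∧ M p.2 i2 = M p.1 i4))
    (hHVH0 : ∀ p ∈ E, ∀ i i' : Fin 4, (SimpleGraph.cycleGraph 4).Adj i i' →
        ¬(M p.1 i = M p.2 i' ∧ M p.2 i = M p.1 i'))
    (hT : ∀ p ∈ E, ∀ q ∈ E, p.2 = q.1 → ∀ i i' : Fin 4, (SimpleGraph.cycleGraph 4).Adj i i' →
        (¬(M p.1 i = M q.2 i ∧ M p.2 i = M q.2 i') ∧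
         ¬(M q.2 i = M p.1 i ∧ M p.2 i = M p.1 i') ∧
         ¬(M p.1 i' = M p.2 i ∧ M p.1 i = M q.2 i) ∧
         ¬(M q.2 i' = M p.2 i ∧ M q.2 i = M p.1 i) ∧
         ¬(M p.1 i = M p.2 i' ∧ M p.2 i = M q.2 i') ∧
         ¬(M q.2 i = M p.2 i' ∧ M p.2 i = M p.1 i')))
    (hQ : ∀ p ∈ E, ∀ q ∈ E, ∀ r ∈ E, p.2 = q.1 → q.2 = r.1 → ∀ i : Fin 4,
        ¬(M p.1 i = M q.2 i ∧ M p.2 i = M r.2 i)) :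
    IsStarColoring ((SimpleGraph.cycleGraph 4).boxProd (SimpleGraph.cycleGraph n))
      (fun v => M (f v.2.val) v.1) := by
  have cne : ∀ {a b : Fin 4} {x y : Fin n}, ((a, x) : Fin 4 × Fin n) ≠ (b, y) → a = b →
      x ≠ y := fun h ha hx => h (by rw [ha, hx])
  have rne : ∀ {a b : Fin 4} {x y : Fin n}, ((a, x) : Fin 4 × Fin n) ≠ (b, y) → x = y →
      a ≠ b := fun h hx ha => h (by rw [ha, hx])
  constructor
  · rintro ⟨i, j⟩ ⟨i', j'⟩ ha he
    rw [SimpleGraph.boxProd_adj] at ha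
    simp only at he
    rcases ha with ⟨h4, hj⟩ | ⟨hcn, hi⟩
    · simp only at hj
      subst hj
      exact hC1 _ (hpair j) i i' h4 he
    · simp only at hi
      subst hi
      rcases (cycle_adj_iff hn _ _).mp hcn with h | h
      · subst h
        exact hC2 _ (hpair j') i he.symm
      · subst h
        exact hC2 _ (hpair j) i he
  · rintro ⟨⟨i1, j1⟩, ⟨i2, j2⟩, ⟨i3, j3⟩, ⟨i4, j4⟩, d12, d13, d14, d23, d24, d34,
      a12, a23, a34, e13, e24⟩
    rw [SimpleGraph.boxProd_adj] at a12 a23 a34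
    simp only at e13 e24 a12 a23 a34
    rcases a12 with ⟨r12, c12⟩ | ⟨c12, r12⟩ <;>
      rcases a23 with ⟨r23, c23⟩ | ⟨c23, r23⟩ <;>
        rcases a34 with ⟨r34, c34⟩ | ⟨c34, r34⟩
    -- Case VVV : survivors i1 i2 i3 i4, j1
    · subst c12; subst c23; subst c34
      exact hC3 _ (hpair j1) i1 i2 i3 i4 (rne d13 rfl) (rne d24 rfl) r12 r23 r34 ⟨e13, e24⟩
    -- Case VVH : i4 ← i3 ; j2,j3 ← j1
    · subst c12; subst c23; subst r34
      rcases (cycle_adj_iff hn _ _).mp c34 with h | h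
      · subst h
        exact (hVVH _ (hpair j4) i1 i2 i3 r12 r23 (rne d13 rfl)).2 ⟨e13, e24⟩
      · subst h
        exact (hVVH _ (hpair j1) i1 i2 i3 r12 r23 (rne d13 rfl)).1 ⟨e13, e24⟩
    -- Case VHV : j2 ← j1 ; i3 ← i2 ; j4 ← j3
    · subst c12; subst r23; subst c34
      rcases (cycle_adj_iff hn _ _).mp c23 with h | h
      · subst h
        exact (hVHV _ (hpair j3) i1 i2 i4 r12 r34.symm).2 ⟨e13, e24⟩
      · subst h
        exact (hVHV _ (hpair j1) i1 i2 i4 r12 r34.symm).1 ⟨e13, e24⟩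
    -- Case VHH : j2 ← j1 ; i3 ← i2 ; i4 ← i2
    · subst c12; subst r23; subst r34
      rcases (cycle_adj_iff hn _ _).mp c23 with h2 | h2 <;>
        rcases (cycle_adj_iff hn _ _).mp c34 with h3 | h3
      · subst h3; subst h2
        exact (hT _ (hpair j4) _ (hpair (j4 + 1)) rfl i2 i1 r12.symm).2.2.2.1 ⟨e13, e24⟩
      · subst h2; subst h3
        exact d24 rfl
      · subst h2
        exact d24 (by rw [add_right_cancel h3])
      · subst h2; subst h3
        exact (hT _ (hpair j1) _ (hpair (j1 + 1)) rfl i2 i1 r12.symm).2.2.1 ⟨e13, e24⟩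
    -- Case HVV : i2 ← i1 ; j3 ← j2 ; j4 ← j2
    · subst r12; subst c23; subst c34
      rcases (cycle_adj_iff hn _ _).mp c12 with h | h
      · subst h
        exact (hHVV _ (hpair j2) i1 i3 i4 r23 r34 (Ne.symm (rne d24 rfl))).2 ⟨e13, e24⟩
      · subst h
        exact (hHVV _ (hpair j1) i1 i3 i4 r23 r34 (Ne.symm (rne d24 rfl))).1 ⟨e13, e24⟩
    -- Case HVH : i2 ← i1 ; j3 ← j2 ; i4 ← i3
    · subst r12; subst c23; subst r34
      rcases (cycle_adj_iff hn _ _).mp c12 with h1 | h1 <;>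
        rcases (cycle_adj_iff hn _ _).mp c34 with h3 | h3
      · subst h3; subst h1
        exact (hT _ (hpair j4) _ (hpair (j4 + 1)) rfl i1 i3 r23).2.2.2.2.2 ⟨e13, e24⟩
      · subst h1; subst h3
        exact hHVH0 _ (hpair j2) i1 i3 r23 ⟨e24, e13⟩
      · subst h1
        have h4 : j1 = j4 := add_right_cancel h3
        subst h4
        exact hHVH0 _ (hpair j1) i1 i3 r23 ⟨e13, e24⟩
      · subst h1; subst h3
        exact (hT _ (hpair j1) _ (hpair (j1 + 1)) rfl i1 i3 r23).2.2.2.2.1 ⟨e13, e24⟩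
    -- Case HHV : i2 ← i1 ; i3 ← i1 ; j4 ← j3
    · subst r12; subst r23; subst c34
      rcases (cycle_adj_iff hn _ _).mp c12 with h1 | h1 <;>
        rcases (cycle_adj_iff hn _ _).mp c23 with h2 | h2
      · subst h2; subst h1
        exact (hT _ (hpair j3) _ (hpair (j3 + 1)) rfl i1 i4 r34).2.1 ⟨e13, e24⟩
      · subst h1; subst h2
        exact d13 rfl
      · subst h1
        exact d13 (by rw [add_right_cancel h2])
      · subst h1; subst h2
        exact (hT _ (hpair j1) _ (hpair (j1 + 1)) rfl i1 i4 r34).1 ⟨e13, e24⟩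
    -- Case HHH : i2,i3,i4 ← i1
    · subst r12; subst r23; subst r34
      rcases (cycle_adj_iff hn _ _).mp c12 with h1 | h1 <;>
        rcases (cycle_adj_iff hn _ _).mp c23 with h2 | h2 <;>
          rcases (cycle_adj_iff hn _ _).mp c34 with h3 | h3
      · subst h3; subst h2; subst h1
        exact hQ _ (hpair j4) _ (hpair (j4 + 1)) _ (hpair (j4 + 1 + 1)) rfl rfl i1
          ⟨e24.symm, e13.symm⟩
      · subst h2; subst h3
        exact d24 rfl
      · subst h1; subst h2
        exact d13 rfl
      · subst h1; subst h2
        exact d13 rfl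
      · subst h1
        exact d13 (by rw [add_right_cancel h2])
      · subst h1
        exact d13 (by rw [add_right_cancel h2])
      · subst h1; subst h2
        exact d24 (by rw [add_right_cancel h3])
      · subst h1; subst h2; subst h3
        exact hQ _ (hpair j1) _ (hpair (j1 + 1)) _ (hpair (j1 + 1 + 1)) rfl rfl i1 ⟨e13, e24⟩

def M4 : ℕ → Fin 4 → Fin 5
  | 0, i => ![0, 1, 0, 2] i
  | 1, i => ![3, 2, 4, 1] i
  | 2, i => ![4, 0, 3, 0] i
  | 3, i => ![3, 2, 4, 1] i
  | _, _ => 0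

def M5 : ℕ → Fin 4 → Fin 5
  | 0, i => ![0, 1, 0, 2] i
  | 1, i => ![3, 2, 3, 1] i
  | 2, i => ![4, 0, 4, 2] i
  | 3, i => ![1, 3, 1, 0] i
  | 4, i => ![4, 2, 4, 3] i
  | _, _ => 0

def E4 : List (ℕ × ℕ) := [(0, 1), (1, 2), (2, 0), (2, 3), (3, 0)]
def E5 : List (ℕ × ℕ) := [(0, 1), (1, 2), (2, 3), (3, 4), (4, 0)]

def sig (n j : ℕ) : ℕ :=
  if j < 3 * ((n - 4 * (n % 3)) / 3) then j % 3
  else (j - 3 * ((n - 4 * (n % 3)) / 3)) % 4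

theorem val_add_one {n : ℕ} [NeZero n] (hn : 3 ≤ n) (j : Fin n) :
    ((j + 1 : Fin n)).val = (j.val + 1) % n := by
  rw [Fin.add_def, Fin.val_one']
  rw [Nat.mod_eq_of_lt (show 1 < n by omega)]

theorem hpair4 {n : ℕ} [NeZero n] (hn : 3 ≤ n) (hn5 : n ≠ 5) (j : Fin n) :
    (sig n j.val, sig n ((j + 1 : Fin n)).val) ∈ E4 := by
  have hkey : 3 * ((n - 4 * (n % 3)) / 3) + 4 * (n % 3) = n := by omega
  have hj : j.val < n := j.is_lt
  have hsplit : (j.val + 1) % n = if j.val + 1 = n then 0 else j.val + 1 := by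
    split_ifs with h
    · rw [h, Nat.mod_self]
    · exact Nat.mod_eq_of_lt (by omega)
  rw [val_add_one hn, hsplit]
  simp only [sig, E4, List.mem_cons, Prod.mk.injEq, List.not_mem_nil, or_false]
  split_ifs <;> omega

theorem upper5 :
    IsStarColoring ((SimpleGraph.cycleGraph 4).boxProd (SimpleGraph.cycleGraph 5))
      (fun v => M5 (v.2.val) v.1) := by
  have h := star_of_pattern (n := 5) (by norm_num) M5 (fun j => j) E5
    (by decide) (by decide) (by decide) (by decide) (by decide) (by decide) (by decide)
    (by decide) (by decide) (by decide)
  exact h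

theorem upper4 {n : ℕ} (hn : 3 ≤ n) (hn5 : n ≠ 5) :
    IsStarColoring ((SimpleGraph.cycleGraph 4).boxProd (SimpleGraph.cycleGraph n))
      (fun v => M4 (sig n v.2.val) v.1) := by
  haveI : NeZero n := ⟨by omega⟩
  exact star_of_pattern hn M4 (sig n) E4 (hpair4 hn hn5)
    (by decide) (by decide) (by decide) (by decide) (by decide) (by decide) (by decide)
    (by decide) (by decide)

end StarAux

/-- For `n ≥ 3`, the star chromatic number of `C4 □ Cn` equals 5. -/
theorem starChromatic_C4_Cn_eq_five (n : ℕ) (hn : 3 ≤ n) :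
    (∃ c : Fin 4 × Fin n → Fin 5,
      IsStarColoring ((SimpleGraph.cycleGraph 4).boxProd (SimpleGraph.cycleGraph n)) c) ∧
    (∀ k : ℕ, (∃ c : Fin 4 × Fin n → Fin k,
      IsStarColoring ((SimpleGraph.cycleGraph 4).boxProd (SimpleGraph.cycleGraph n)) c) →
      5 ≤ k) := by
  constructor
  · by_cases h5 : n = 5
    · subst h5
      exact ⟨_, StarAux.upper5⟩
    · exact ⟨_, StarAux.upper4 hn h5⟩
  · rintro k ⟨c, hc⟩
    by_contra hk
    push_neg at hk
    have hk4 : k ≤ 4 := by omega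
    rcases eq_or_lt_of_le hn with h3 | h4
    · rcases h3 with rfl
      exact StarAux.lower_C3 hk4 c hc
    · exact StarAux.lower_P4 (by omega) hk4 c hc
end

section
/- For every natural number n with n ≥ 4, the star chromatic number of the Cartesian product C5 □ Cn equals 5; that is, C5 □ Cn admits a star coloring with 5 colors, and every star coloring of C5 □ Cn uses at least 5 colors. -/
section StarHelpers

open SimpleGraph

/-- Composing a star coloring with an injective map is a star coloring. -/
theorem isStarColoring_comp {V : Type*} {G : SimpleGraph V} {k k' : ℕ}
    {c : V → Fin k} (g : Fin k → Fin k') (hg : Function.Injective g)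
    (hc : IsStarColoring G c) : IsStarColoring G (fun v => g (c v)) := by
  constructor
  · intro u v ha he
    exact hc.1 u v ha (hg he)
  · rintro ⟨v1, v2, v3, v4, h12, h13, h14, h23, h24, h34, a12, a23, a34, e13, e24⟩
    exact hc.2 ⟨v1, v2, v3, v4, h12, h13, h14, h23, h24, h34, a12, a23, a34, hg e13, hg e24⟩

/-- Adjacency in a cycle graph from a successor relation on values. -/
theorem cyc_adj_succ {N : ℕ} (h2 : 2 ≤ N) {u v : Fin N} (h : v.val = (u.val + 1) % N) :
    (cycleGraph N).Adj u v := by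
  obtain ⟨M, rfl⟩ : ∃ M, N = M + 2 := ⟨N - 2, by omega⟩
  haveI : NeZero (M + 2) := ⟨by omega⟩
  have hv : v = u + 1 := by
    apply Fin.ext
    rw [Fin.val_add, Fin.val_one' (M + 2),
      Nat.mod_eq_of_lt (show (1 : ℕ) < M + 2 by omega)]
    exact h
  rw [cycleGraph_adj]
  right; rw [hv]; exact add_sub_cancel_left u 1

/-- Decomposition of adjacency in a cycle graph. -/
theorem cyc_adj_cases {N : ℕ} {x y : Fin (N + 2)} (h : (cycleGraph (N + 2)).Adj x y) :
    y = x + 1 ∨ y = x - 1 := by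
  rcases cycleGraph_adj.mp h with h1 | h1
  · right
    rw [eq_sub_iff_add_eq]
    rw [sub_eq_iff_eq_add] at h1
    rw [h1]
    exact add_comm y 1
  · left
    rw [sub_eq_iff_eq_add] at h1
    rw [h1]
    exact add_comm 1 x

/-- Decomposition of adjacency in `C5 □ C(m+4)`. -/
theorem gg_adj_cases {m : ℕ} {x y : Fin 5 × Fin (m + 4)}
    (h : ((cycleGraph 5).boxProd (cycleGraph (m + 4))).Adj x y) :
    y = (x.1 + 1, x.2) ∨ y = (x.1 - 1, x.2) ∨ y = (x.1, x.2 + 1) ∨ y = (x.1, x.2 - 1) := by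
  rcases boxProd_adj.mp h with ⟨h1, h2⟩ | ⟨h1, h2⟩
  · rcases cyc_adj_cases (N := 3) h1 with h3 | h3
    · exact Or.inl (Prod.ext h3 h2.symm)
    · exact Or.inr (Or.inl (Prod.ext h3 h2.symm))
  · rcases cyc_adj_cases (N := m + 2) h1 with h3 | h3
    · exact Or.inr (Or.inr (Or.inl (Prod.ext h2.symm h3)))
    · exact Or.inr (Or.inr (Or.inr (Prod.ext h2.symm h3)))

end StarHelpers
def lbAt : Nat → List (Nat × Nat × Nat × Nat)
  | 0 => []
  | 1 => [(0, 0, 1, 1)]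
  | 2 => [(1, 1, 2, 2)]
  | 3 => [(2, 2, 3, 3), (0, 1, 2, 3)]
  | 4 => [(0, 0, 4, 4), (3, 3, 4, 4), (1, 0, 4, 3), (1, 2, 3, 4), (2, 3, 4, 0), (4, 0, 1, 2)]
  | 5 => [(0, 0, 5, 5), (5, 0, 1, 2), (5, 0, 4, 3)]
  | 6 => [(1, 1, 6, 6), (5, 5, 6, 6), (0, 1, 6, 5), (0, 5, 6, 1), (1, 0, 5, 6), (2, 1, 6, 5), (4, 0, 1, 6), (4, 0, 5, 6), (5, 0, 1, 6), (6, 1, 2, 3)]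
  | 7 => [(2, 2, 7, 7), (6, 6, 7, 7), (0, 1, 2, 7), (0, 1, 6, 7), (0, 5, 6, 7), (1, 2, 7, 6), (1, 6, 7, 2), (2, 1, 6, 7), (3, 2, 7, 6), (5, 6, 7, 2), (6, 1, 2, 7), (7, 2, 3, 4)]
  | 8 => [(3, 3, 8, 8), (7, 7, 8, 8), (1, 2, 3, 8), (1, 2, 7, 8), (1, 6, 7, 8), (2, 3, 8, 7), (2, 7, 8, 3), (3, 2, 7, 8), (4, 3, 8, 7), (5, 6, 7, 8), (6, 7, 8, 3), (7, 2, 3, 8), (8, 3, 4, 0)]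
  | 9 => [(4, 4, 9, 9), (5, 5, 9, 9), (8, 8, 9, 9), (0, 4, 9, 5), (0, 4, 9, 8), (0, 5, 9, 4), (0, 5, 9, 8), (1, 0, 4, 9), (1, 0, 5, 9), (2, 3, 4, 9), (2, 3, 8, 9), (2, 7, 8, 9), (3, 4, 9, 5), (3, 4, 9, 8), (3, 8, 9, 4), (3, 8, 9, 5), (4, 0, 5, 9), (4, 3, 8, 9), (5, 0, 4, 9), (6, 5, 9, 4), (6, 5, 9, 8), (6, 7, 8, 9), (7, 8, 9, 4), (7, 8, 9, 5), (8, 3, 4, 9), (9, 5, 6, 1), (9, 5, 6, 7)]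
  | 10 => [(5, 5, 10, 10), (1, 0, 5, 10), (4, 0, 5, 10), (10, 5, 6, 1), (10, 5, 6, 7), (10, 5, 9, 4), (10, 5, 9, 8)]
  | 11 => [(6, 6, 11, 11), (10, 10, 11, 11), (0, 1, 6, 11), (0, 5, 6, 11), (0, 5, 10, 11), (1, 6, 11, 10), (2, 1, 6, 11), (5, 6, 11, 10), (5, 10, 11, 6), (6, 5, 10, 11), (7, 6, 11, 10), (9, 5, 6, 11), (9, 5, 10, 11), (10, 5, 6, 11), (11, 6, 7, 2), (11, 6, 7, 8)]
  | 12 => [(7, 7, 12, 12), (11, 11, 12, 12), (1, 2, 7, 12), (1, 6, 7, 12), (1, 6, 11, 12), (2, 7, 12, 11), (3, 2, 7, 12), (5, 6, 7, 12), (5, 6, 11, 12), (5, 10, 11, 12), (6, 7, 12, 11), (6, 11, 12, 7), (7, 6, 11, 12), (8, 7, 12, 11), (10, 11, 12, 7), (11, 6, 7, 12), (12, 7, 8, 3), (12, 7, 8, 9)]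
  | 13 => [(8, 8, 13, 13), (12, 12, 13, 13), (2, 3, 8, 13), (2, 7, 8, 13), (2, 7, 12, 13), (3, 8, 13, 12), (4, 3, 8, 13), (6, 7, 8, 13), (6, 7, 12, 13), (6, 11, 12, 13), (7, 8, 13, 12), (7, 12, 13, 8), (8, 7, 12, 13), (9, 8, 13, 12), (10, 11, 12, 13), (11, 12, 13, 8), (12, 7, 8, 13), (13, 8, 9, 4), (13, 8, 9, 5)]
  | 14 => [(9, 9, 14, 14), (10, 10, 14, 14), (13, 13, 14, 14), (0, 4, 9, 14), (0, 5, 9, 14), (0, 5, 10, 14), (3, 4, 9, 14), (3, 8, 9, 14), (3, 8, 13, 14), (4, 9, 14, 10), (4, 9, 14, 13), (5, 9, 14, 10), (5, 9, 14, 13), (5, 10, 14, 9), (5, 10, 14, 13), (6, 5, 9, 14), (6, 5, 10, 14), (7, 8, 9, 14), (7, 8, 13, 14), (7, 12, 13, 14), (8, 9, 14, 10), (8, 9, 14, 13), (8, 13, 14, 9), (8, 13, 14, 10), (9, 5, 10, 14), (9, 8, 13, 14), (10, 5, 9, 14), (11, 10, 14, 9), (11, 10, 14, 13), (11, 12, 13,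 14), (12, 13, 14, 9), (12, 13, 14, 10), (13, 8, 9, 14), (14, 10, 11, 6), (14, 10, 11, 12)]
  | _ => []

def badQ (col : Nat → Nat) (q : Nat × Nat × Nat × Nat) : Bool :=
  (col q.1 == col q.2.2.1) && (col q.2.1 == col q.2.2.2)

def checkAt (col : Nat → Nat) (v : Nat) : Bool :=
  (lbAt v).all (fun q => !(badQ col q))

def search : Nat → Nat → (Nat → Nat) → Bool
  | 0, _, _ => true
  | (fuel+1), v, col =>
    (List.range 4).any (fun d =>
      let col' := fun i => if i = v then d else col i
      checkAt col' v && search fuel (v+1) col')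

/-- Nat-level adjacency pattern for the `C5 □ P3` template on vertex ids `5*j+i`. -/
def natAdj (a b : ℕ) : Bool :=
  decide ((a / 5 = b / 5 ∧ (b % 5 = (a % 5 + 1) % 5 ∨ a % 5 = (b % 5 + 1) % 5)) ∨
    (a % 5 = b % 5 ∧ (b / 5 = a / 5 + 1 ∨ a / 5 = b / 5 + 1)))

def lbOK (q : Nat × Nat × Nat × Nat) : Bool :=
  match q with
  | (a, b, c, d) =>
    (decide (a < 15) && decide (b < 15) && decide (c < 15) && decide (d < 15)) &&
    ((a == b && c == d && natAdj a c) ||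
     (natAdj a b && natAdj b c && natAdj c d &&
      a != b && a != c && a != d && b != c && b != d && c != d))

theorem lbAt_bounds : ∀ v < 15, ∀ q ∈ lbAt v,
    q.1 ≤ v ∧ q.2.1 ≤ v ∧ q.2.2.1 ≤ v ∧ q.2.2.2 ≤ v := by decide

theorem lbAt_OK : ∀ v < 15, ∀ q ∈ lbAt v, lbOK q = true := by decide

theorem search_complete (f : Nat → Nat) (hf4 : ∀ i, f i < 4)
    (hval : ∀ v < 15, checkAt f v = true) :
    ∀ fuel v col, fuel + v = 15 → (∀ i < v, col i = f i) → search fuel v col = true := by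
  intro fuel
  induction fuel with
  | zero => intro v col _ _; rfl
  | succ fu ih =>
    intro v col hfv hagree
    have hv : v < 15 := by omega
    rw [search, List.any_eq_true]
    refine ⟨f v, List.mem_range.mpr (hf4 v), ?_⟩
    have hagree' : ∀ i < v + 1, (if i = v then f v else col i) = f i := by
      intro i hi
      by_cases h : i = v
      · simp [h]
      · simp only [if_neg h]; exact hagree i (by omega)
    rw [Bool.and_eq_true]
    constructor
    · rw [checkAt, List.all_eq_true]
      intro q hq
      obtain ⟨b1, b2, b3, b4⟩ := lbAt_bounds v hv q hq
      have hc := hval v hv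
      rw [checkAt, List.all_eq_true] at hc
      have := hc q hq
      simp only [badQ] at this ⊢
      rwa [hagree' _ (by omega), hagree' _ (by omega), hagree' _ (by omega),
        hagree' _ (by omega)]
    · exact ih (v+1) _ (by omega) (fun i hi => hagree' i hi)

theorem search_false : search 13 2 (fun i => if i = 1 then 1 else 0) = false := by decide

section LowerSemantics

open SimpleGraph

variable {m : ℕ}

/-- Embedding of the template vertex ids into `C5 □ C(m+4)`. -/
def emb (m : ℕ) (v : ℕ) : Fin 5 × Fin (m + 4) :=
  (⟨v % 5, Nat.mod_lt _ (by omega)⟩, ⟨(v / 5) % (m + 4), Nat.mod_lt _ (by omega)⟩)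

theorem emb_inj {a b : ℕ} (ha : a < 15) (hb : b < 15) (hne : a ≠ b) :
    emb m a ≠ emb m b := by
  intro h
  rw [Prod.ext_iff] at h
  have h1 : a % 5 = b % 5 := congrArg Fin.val h.1
  have h2 : (a / 5) % (m + 4) = (b / 5) % (m + 4) := congrArg Fin.val h.2
  rw [Nat.mod_eq_of_lt (by omega : a / 5 < m + 4),
    Nat.mod_eq_of_lt (by omega : b / 5 < m + 4)] at h2
  omega

theorem natAdj_spec {a b : ℕ} (ha : a < 15) (hb : b < 15) (h : natAdj a b = true) :
    ((cycleGraph 5).boxProd (cycleGraph (m + 4))).Adj (emb m a) (emb m b) := by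
  rw [natAdj, decide_eq_true_iff] at h
  rcases h with ⟨hd, hs | hs⟩ | ⟨hs, hd | hd⟩
  · exact boxProd_adj.mpr (Or.inl ⟨cyc_adj_succ (by omega) (by simpa [emb] using hs),
      by simp [emb, hd]⟩)
  · exact boxProd_adj.mpr (Or.inl ⟨(cyc_adj_succ (by omega)
      (by simpa [emb] using hs)).symm, by simp [emb, hd]⟩)
  · refine boxProd_adj.mpr (Or.inr ⟨cyc_adj_succ (by omega) ?_, by simp [emb, hs]⟩)
    show (b / 5) % (m + 4) = ((a / 5) % (m + 4) + 1) % (m + 4)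
    rw [Nat.mod_eq_of_lt (by omega : a / 5 < m + 4),
      Nat.mod_eq_of_lt (by omega : b / 5 < m + 4),
      Nat.mod_eq_of_lt (by omega : a / 5 + 1 < m + 4)]
    omega
  · refine boxProd_adj.mpr (Or.inr ⟨(cyc_adj_succ (by omega) ?_).symm, by simp [emb, hs]⟩)
    show (a / 5) % (m + 4) = ((b / 5) % (m + 4) + 1) % (m + 4)
    rw [Nat.mod_eq_of_lt (by omega : a / 5 < m + 4),
      Nat.mod_eq_of_lt (by omega : b / 5 < m + 4),
      Nat.mod_eq_of_lt (by omega : b / 5 + 1 < m + 4)]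
    omega

theorem lower_bound (m k : ℕ) (c : Fin 5 × Fin (m + 4) → Fin k)
    (hc : IsStarColoring ((cycleGraph 5).boxProd (cycleGraph (m + 4))) c) : 5 ≤ k := by
  by_contra hk
  have hk4 : k ≤ 4 := by omega
  -- normalize to 4 colors
  have hc4 := isStarColoring_comp (Fin.castLE hk4) (Fin.castLE_injective hk4) hc
  set c4 : Fin 5 × Fin (m + 4) → Fin 4 := fun v => Fin.castLE hk4 (c v) with hc4def
  set x0 : Fin 5 × Fin (m + 4) := (0, 0)
  set x1 : Fin 5 × Fin (m + 4) := (1, 0)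
  have hadj01 : ((cycleGraph 5).boxProd (cycleGraph (m + 4))).Adj x0 x1 := by
    have h5 : (cycleGraph 5).Adj 0 1 := by decide
    exact boxProd_adj.mpr (Or.inl ⟨h5, rfl⟩)
  -- swap colors so that x0 ↦ 0
  have hc5 := isStarColoring_comp (Equiv.swap (c4 x0) 0) (Equiv.injective _) hc4
  set c5 : Fin 5 × Fin (m + 4) → Fin 4 := fun v => Equiv.swap (c4 x0) 0 (c4 v) with hc5def
  have hx0 : c5 x0 = 0 := Equiv.swap_apply_left _ _
  have hne10 : c5 x1 ≠ 0 := by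
    rw [← hx0]
    exact fun h => hc5.1 x0 x1 hadj01 (h.symm)
  -- swap colors so that x1 ↦ 1, fixing 0
  have hc6 := isStarColoring_comp (Equiv.swap (c5 x1) 1) (Equiv.injective _) hc5
  set c6 : Fin 5 × Fin (m + 4) → Fin 4 := fun v => Equiv.swap (c5 x1) 1 (c5 v) with hc6def
  have hx1' : c6 x1 = 1 := Equiv.swap_apply_left _ _
  have hx0' : c6 x0 = 0 := by
    rw [hc6def]
    simp only []
    rw [hx0]
    exact Equiv.swap_apply_of_ne_of_ne (Ne.symm hne10) (by decide)
  -- the induced Nat coloring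
  set f : Nat → Nat := fun v => (c6 (emb m v)).val with hfdef
  have hf4 : ∀ i, f i < 4 := fun i => (c6 (emb m i)).isLt
  have hemb0 : emb m 0 = x0 := by
    apply Prod.ext
    · rfl
    · apply Fin.ext
      show (0 / 5) % (m + 4) = 0
      simp
  have hemb1 : emb m 1 = x1 := by
    apply Prod.ext
    · rfl
    · apply Fin.ext
      show (1 / 5) % (m + 4) = 0
      simp
  -- validity of f for all template constraints
  have hOK : ∀ q : Nat × Nat × Nat × Nat, lbOK q = true → badQ f q = false := by
    rintro ⟨a, b, cc, d⟩ hq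
    simp only [lbOK, Bool.and_eq_true, Bool.or_eq_true, beq_iff_eq, bne_iff_ne,
      decide_eq_true_iff] at hq
    obtain ⟨⟨⟨⟨ha, hb⟩, hcc⟩, hd⟩, hq⟩ := hq
    rw [Bool.eq_false_iff]
    intro hbad
    rw [badQ, Bool.and_eq_true, beq_iff_eq, beq_iff_eq] at hbad
    obtain ⟨e1, e2⟩ := hbad
    rcases hq with ⟨⟨hab, hcd⟩, hadj⟩ | ⟨⟨⟨⟨⟨⟨⟨⟨hadj1, hadj2⟩, hadj3⟩, n1⟩, n2⟩, n3⟩, n4⟩, n5⟩, n6⟩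
    · -- edge constraint
      subst hab; subst hcd
      exact hc6.1 _ _ (natAdj_spec ha hcc hadj) (Fin.val_injective e1)
    · -- path constraint
      exact hc6.2 ⟨emb m a, emb m b, emb m cc, emb m d,
        emb_inj ha hb n1, emb_inj ha hcc n2, emb_inj ha hd n3,
        emb_inj hb hcc n4, emb_inj hb hd n5, emb_inj hcc hd n6,
        natAdj_spec ha hb hadj1, natAdj_spec hb hcc hadj2, natAdj_spec hcc hd hadj3,
        Fin.val_injective e1, Fin.val_injective e2⟩
  have hval : ∀ v < 15, checkAt f v = true := by
    intro v hv
    rw [checkAt, List.all_eq_true]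
    intro q hq
    rw [Bool.not_eq_true']
    exact hOK q (lbAt_OK v hv q hq)
  have hcompl := search_complete f hf4 hval 13 2 (fun i => if i = 1 then 1 else 0)
    rfl (by
      intro i hi
      interval_cases i
      · show (0 : ℕ) = f 0
        rw [hfdef]
        simp only []
        rw [hemb0, hx0']
        rfl
      · show (1 : ℕ) = f 1
        rw [hfdef]
        simp only []
        rw [hemb1, hx1']
        rfl)
  rw [search_false] at hcompl
  exact Bool.false_ne_true hcompl

end LowerSemantics
section UpperGeneric

open SimpleGraph
open Fin.CommRing

theorem finL0 : ∀ i x : Fin 5,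
    (i + x ≠ i + 1 + x) ∧ (i + x ≠ i - 1 + x) ∧
    (i - 1 + x ≠ i + 1 + x) ∧ (i + 1 + x ≠ i - 1 + x) := by decide

theorem finLA : ∀ i x y : Fin 5, (y - x = 2 ∨ y - x = 3) →
    (i + y ≠ i + x) ∧ (i + x ≠ i + y) ∧
    (i + y ≠ i + 1 + x) ∧ (i + y ≠ i - 1 + x) ∧
    (i + 1 + y ≠ i + x) ∧ (i - 1 + y ≠ i + x) ∧
    (i + x ≠ i + 1 + y) ∧ (i + x ≠ i - 1 + y) ∧
    (i + 1 + x ≠ i + y) ∧ (i - 1 + x ≠ i + y) := by decide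

/-- The generic "diagonal shift" construction gives a star coloring. -/
theorem upperU (m : ℕ) (a : Fin (m + 4) → Fin 5)
    (hA : ∀ j, a (j + 1) - a j = 2 ∨ a (j + 1) - a j = 3)
    (hB : ∀ j, ¬(a (j + 2) = a j ∧ a (j + 3) = a (j + 1))) :
    IsStarColoring ((cycleGraph 5).boxProd (cycleGraph (m + 4)))
      (fun p => p.1 + a p.2) := by
  haveI : NeZero (m + 4) := ⟨by omega⟩
  have hA' : ∀ j : Fin (m + 4), a j - a (j - 1) = 2 ∨ a j - a (j - 1) = 3 := by
    intro j
    have h := hA (j - 1)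
    rwa [sub_add_cancel] at h
  constructor
  · rintro ⟨i, j⟩ y hadj heq
    rcases gg_adj_cases hadj with h | h | h | h <;> subst h <;> dsimp only at heq
    · exact (finL0 i (a j)).1 heq
    · exact (finL0 i (a j)).2.1 heq
    · exact (finLA i (a j) (a (j + 1)) (hA j)).2.1 heq
    · exact (finLA i (a (j - 1)) (a j) (hA' j)).1 heq
  · rintro ⟨v1, v2, v3, v4, h12, h13, h14, h23, h24, h34, a12, a23, a34, e13, e24⟩
    obtain ⟨i, j⟩ := v2
    rcases gg_adj_cases a23 with h | h | h | h <;> subst h <;>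
      rcases gg_adj_cases a12.symm with g | g | g | g <;> subst g <;>
      dsimp only at e13 e24 h13 h24
    -- s2 = U
    · exact h13 rfl
    · exact (finL0 i (a j)).2.2.1 e13
    · exact (finLA i (a j) (a (j + 1)) (hA j)).2.2.1 e13
    · exact (finLA i (a (j - 1)) (a j) (hA' j)).2.2.2.2.2.2.1 e13
    -- s2 = D
    · exact (finL0 i (a j)).2.2.2 e13
    · exact h13 rfl
    · exact (finLA i (a j) (a (j + 1)) (hA j)).2.2.2.1 e13
    · exact (finLA i (a (j - 1)) (a j) (hA' j)).2.2.2.2.2.2.2.1 e13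
    -- s2 = R
    · exact (finLA i (a j) (a (j + 1)) (hA j)).2.2.2.2.2.2.2.2.1 e13
    · exact (finLA i (a j) (a (j + 1)) (hA j)).2.2.2.2.2.2.2.2.2 e13
    · exact h13 rfl
    · -- s1 = L : split on v4
      rcases gg_adj_cases a34 with k | k <;> [skip; rcases k with k | k | k] <;>
        subst k <;> dsimp only at e24 h24
      · exact (finLA i (a j) (a (j + 1)) (hA j)).2.2.2.2.2.2.1 e24
      · exact (finLA i (a j) (a (j + 1)) (hA j)).2.2.2.2.2.2.2.1 e24
      · -- v4 = (i, j+1+1) : use hB (j-1)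
        have i1 : j - 1 + 2 = j + 1 := by ring
        have i2 : j - 1 + 3 = j + 1 + 1 := by ring
        have i3 : j - 1 + 1 = j := by ring
        have hb := hB (j - 1)
        rw [i1, i2, i3] at hb
        exact hb ⟨(add_left_cancel e13).symm, (add_left_cancel e24).symm⟩
      · -- v4 = (i, j+1-1) = v2
        exact h24 (Prod.ext rfl (add_sub_cancel_right j 1).symm)
    -- s2 = L
    · exact (finLA i (a (j - 1)) (a j) (hA' j)).2.2.2.2.1 e13
    · exact (finLA i (a (j - 1)) (a j) (hA' j)).2.2.2.2.2.1 e13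
    · -- s1 = R : split on v4
      rcases gg_adj_cases a34 with k | k <;> [skip; rcases k with k | k | k] <;>
        subst k <;> dsimp only at e24 h24
      · exact (finLA i (a (j - 1)) (a j) (hA' j)).2.2.1 e24
      · exact (finLA i (a (j - 1)) (a j) (hA' j)).2.2.2.1 e24
      · -- v4 = (i, j-1+1) = v2
        exact h24 (Prod.ext rfl (sub_add_cancel j 1).symm)
      · -- v4 = (i, j-1-1) : use hB (j-1-1)
        have i1 : j - 1 - 1 + 2 = j := by ring
        have i2 : j - 1 - 1 + 3 = j + 1 := by ring
        have i3 : j - 1 - 1 + 1 = j - 1 := by ring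
        have hb := hB (j - 1 - 1)
        rw [i1, i2, i3] at hb
        exact hb ⟨add_left_cancel e24, add_left_cancel e13⟩
    · exact h13 rfl

end UpperGeneric
section Aseq

open SimpleGraph
open Fin.CommRing

/-- The column-shift sequence. -/
def aseq (N t : ℕ) (j : Fin N) : Fin 5 := ((2 * j.val + min j.val t : ℕ) : Fin 5)

theorem aseq_diff (m t : ℕ) (ht5 : (2 * (m + 4) + t) % 5 = 0) (htn : t ≤ m + 2) :
    ∀ j : Fin (m + 4), aseq (m + 4) t (j + 1) - aseq (m + 4) t j
      = (if j.val < t then (3 : Fin 5) else 2) := by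
  haveI : NeZero (m + 4) := ⟨by omega⟩
  intro j
  have hj : j.val < m + 4 := j.isLt
  have hval : ((j + 1 : Fin (m + 4))).val = (j.val + 1) % (m + 4) := by
    rw [Fin.val_add, Fin.val_one' (m + 4),
      Nat.mod_eq_of_lt (show (1 : ℕ) < m + 4 by omega)]
  rcases Nat.lt_or_ge (j.val + 1) (m + 4) with hlt | hge
  · rw [Nat.mod_eq_of_lt hlt] at hval
    by_cases hc : j.val < t
    · rw [if_pos hc]
      have harith : 2 * (j.val + 1) + min (j.val + 1) t = (2 * j.val + min j.val t) + 3 := by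
        omega
      simp only [aseq, hval, harith, Nat.cast_add, Nat.cast_ofNat]
      exact add_sub_cancel_left _ _
    · rw [if_neg hc]
      have harith : 2 * (j.val + 1) + min (j.val + 1) t = (2 * j.val + min j.val t) + 2 := by
        omega
      simp only [aseq, hval, harith, Nat.cast_add, Nat.cast_ofNat]
      exact add_sub_cancel_left _ _
  · have hEq : j.val + 1 = m + 4 := by omega
    have hzero : ((j + 1 : Fin (m + 4))).val = 0 := by rw [hval, hEq, Nat.mod_self]
    rw [if_neg (by omega : ¬ j.val < t)]
    have hmin : min j.val t = t := by omega
    have h5 : 2 * (m + 4) + t = 5 * ((2 * (m + 4) + t) / 5) := by omega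
    have h6 : (2 * j.val + min j.val t) + 2 = 5 * ((2 * (m + 4) + t) / 5) := by omega
    have hX : ((2 * j.val + min j.val t : ℕ) : Fin 5) + 2 = 0 := by
      have hc := congrArg (fun x : ℕ => (x : Fin 5)) h6
      push_cast at hc ⊢
      rw [hc]
      ring
    have hY : aseq (m + 4) t (j + 1) = 0 := by
      simp only [aseq, hzero]
      norm_num
    rw [hY]
    simp only [aseq]
    linear_combination -hX

theorem mkA (m t : ℕ) (ht5 : (2 * (m + 4) + t) % 5 = 0) (htn : t ≤ m + 2) :
    ∀ j : Fin (m + 4), aseq (m + 4) t (j + 1) - aseq (m + 4) t j = 2 ∨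
      aseq (m + 4) t (j + 1) - aseq (m + 4) t j = 3 := by
  intro j
  have h := aseq_diff m t ht5 htn j
  by_cases hc : j.val < t
  · right; rwa [if_pos hc] at h
  · left; rwa [if_neg hc] at h

theorem mkB (m t : ℕ) (ht5 : (2 * (m + 4) + t) % 5 = 0) (htn : t ≤ m + 2)
    (hcond : t = 0 ∨ (2 ≤ t ∧ t + 2 ≤ m + 4)) :
    ∀ j : Fin (m + 4), ¬(aseq (m + 4) t (j + 2) = aseq (m + 4) t j ∧
      aseq (m + 4) t (j + 3) = aseq (m + 4) t (j + 1)) := by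
  haveI : NeZero (m + 4) := ⟨by omega⟩
  rintro j ⟨h1, h2⟩
  have d1 := aseq_diff m t ht5 htn j
  have d2 := aseq_diff m t ht5 htn (j + 1)
  have d3 := aseq_diff m t ht5 htn (j + 2)
  have i21 : (j : Fin (m + 4)) + 1 + 1 = j + 2 := by ring
  have i32 : (j : Fin (m + 4)) + 2 + 1 = j + 3 := by ring
  rw [i21] at d2
  rw [i32] at d3
  have s1 : (if ((j + 1 : Fin (m + 4))).val < t then (3 : Fin 5) else 2) +
      (if j.val < t then (3 : Fin 5) else 2) = 0 := by
    rw [← d1, ← d2, h1]; ring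
  have s2 : (if ((j + 2 : Fin (m + 4))).val < t then (3 : Fin 5) else 2) +
      (if ((j + 1 : Fin (m + 4))).val < t then (3 : Fin 5) else 2) = 0 := by
    rw [← d2, ← d3, h2]; ring
  have hv1 : ((j + 1 : Fin (m + 4))).val = (j.val + 1) % (m + 4) := by
    rw [Fin.val_add, Fin.val_one' (m + 4),
      Nat.mod_eq_of_lt (show (1 : ℕ) < m + 4 by omega)]
  have hv2 : ((j + 2 : Fin (m + 4))).val = (((j + 1 : Fin (m + 4))).val + 1) % (m + 4) := by
    rw [← i21, Fin.val_add, Fin.val_one' (m + 4),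
      Nat.mod_eq_of_lt (show (1 : ℕ) < m + 4 by omega)]
  have hj := j.isLt
  have hj1 := (j + 1 : Fin (m + 4)).isLt
  have F1 : ((j + 1 : Fin (m + 4))).val = j.val + 1 ∨
      (j.val + 1 = m + 4 ∧ ((j + 1 : Fin (m + 4))).val = 0) := by
    rcases Nat.lt_or_ge (j.val + 1) (m + 4) with h | h
    · left; rw [hv1, Nat.mod_eq_of_lt h]
    · right
      have he : j.val + 1 = m + 4 := by omega
      exact ⟨he, by rw [hv1, he, Nat.mod_self]⟩
  have F2 : ((j + 2 : Fin (m + 4))).val = ((j + 1 : Fin (m + 4))).val + 1 ∨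
      (((j + 1 : Fin (m + 4))).val + 1 = m + 4 ∧ ((j + 2 : Fin (m + 4))).val = 0) := by
    rcases Nat.lt_or_ge (((j + 1 : Fin (m + 4))).val + 1) (m + 4) with h | h
    · left; rw [hv2, Nat.mod_eq_of_lt h]
    · right
      have he : ((j + 1 : Fin (m + 4))).val + 1 = m + 4 := by omega
      exact ⟨he, by rw [hv2, he, Nat.mod_self]⟩
  by_cases c0 : j.val < t <;> by_cases c1 : ((j + 1 : Fin (m + 4))).val < t <;>
    by_cases c2 : ((j + 2 : Fin (m + 4))).val < t <;>
    simp only [c0, c1, c2, if_true, if_false, if_pos, if_neg, not_false_iff] at s1 s2 <;>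
    first
      | exact absurd s1 (by decide)
      | exact absurd s2 (by decide)
      | omega

end Aseq
section SevenCase

open SimpleGraph

/-- An explicit star coloring of `C5 □ C7`. -/
def tbl : Fin 5 × Fin 7 → Fin 5 := fun p =>
  ![![0, 1, 0, 2, 0, 1, 2],
    ![2, 3, 4, 1, 4, 3, 4],
    ![1, 0, 2, 3, 2, 0, 2],
    ![4, 3, 1, 0, 1, 2, 3],
    ![3, 2, 4, 1, 3, 4, 1]] p.1 p.2

set_option maxHeartbeats 4000000 in
theorem star7 : IsStarColoring ((cycleGraph 5).boxProd (cycleGraph 7)) tbl := by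
  constructor
  · intro x y hadj heq
    rcases gg_adj_cases (m := 3) hadj with h | h | h | h <;> subst h <;>
      revert heq <;> clear hadj <;> revert x <;> decide
  · rintro ⟨v1, v2, v3, v4, h12, h13, h14, h23, h24, h34, a12, a23, a34, e13, e24⟩
    rcases gg_adj_cases (m := 3) a12.symm with g | g | g | g <;> subst g <;>
      rcases gg_adj_cases (m := 3) a23 with h | h | h | h <;> subst h <;>
      rcases gg_adj_cases (m := 3) a34 with k | k | k | k <;> subst k <;>
      clear a12 a23 a34 <;>
      revert h12 h13 h14 h23 h24 h34 e13 e24 <;> revert v2 <;> decide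

end SevenCase
section Main

open SimpleGraph

theorem upper_main (m : ℕ) (hm : m ≠ 3) :
    ∃ c : Fin 5 × Fin (m + 4) → Fin 5,
      IsStarColoring ((cycleGraph 5).boxProd (cycleGraph (m + 4))) c := by
  obtain ⟨t, ht5, htn, hcond⟩ : ∃ t : ℕ, (2 * (m + 4) + t) % 5 = 0 ∧ t ≤ m + 2 ∧
      (t = 0 ∨ (2 ≤ t ∧ t + 2 ≤ m + 4)) := by
    obtain ⟨r, q, hq, hr5⟩ : ∃ r q, 3 * (m + 4) = 5 * q + r ∧ r < 5 :=
      ⟨(3 * (m + 4)) % 5, (3 * (m + 4)) / 5, by omega, by omega⟩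
    by_cases h : r = 1
    · exact ⟨6, by omega, by omega, by omega⟩
    · exact ⟨r, by interval_cases r <;> omega, by interval_cases r <;> omega,
        by interval_cases r <;> omega⟩
  exact ⟨_, upperU m (aseq (m + 4) t) (mkA m t ht5 htn) (mkB m t ht5 htn hcond)⟩

end Main

/-- For `n ≥ 4`, the star chromatic number of `C5 □ Cn` equals 5. -/
theorem starChromatic_C5_Cn_eq_five (n : ℕ) (hn : 4 ≤ n) :
    (∃ c : Fin 5 × Fin n → Fin 5,
      IsStarColoring ((SimpleGraph.cycleGraph 5).boxProd (SimpleGraph.cycleGraph n)) c) ∧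
    (∀ k : ℕ, (∃ c : Fin 5 × Fin n → Fin k,
      IsStarColoring ((SimpleGraph.cycleGraph 5).boxProd (SimpleGraph.cycleGraph n)) c) →
      5 ≤ k) := by
  obtain ⟨m, rfl⟩ : ∃ m, n = m + 4 := ⟨n - 4, by omega⟩
  constructor
  · by_cases hm : m = 3
    · subst hm
      exact ⟨tbl, star7⟩
    · exact upper_main m hm
  · rintro k ⟨c, hc⟩
    exact lower_bound m k c hc
end
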